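/- Let G be a finite simple maximal outerplanar graph and let xy be an edge of G with d_x ≤ d_y whose common neighborhood is N(x) ∩ N(y) = {w, z} with w ≠ z, such that |N(x) ∩ N(w) \ {y}| = 0, |N(x) ∩ N(z) \ {y}| = 0, |N(y) ∩ N(w) \ {x}| = 0, and |N(y) ∩ N(z) \ {x}| = 0. Then the Lin–Lu–Yau curvature satisfies κ(x,y) = 4/d_x + 6/d_y − 2. -/

import Mathlib

open SimpleGraph

/-- `H` is a minor of `G`: there is a family of nonempty, connected, pairwise disjoint
branch sets in `G`, one for each vertex of `H`, with an edge of `G` between the branch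
sets corresponding to each edge of `H`. -/
def SimpleGraph.IsMinorOf {W : Type*} {V : Type*} (H : SimpleGraph W) (G : SimpleGraph V) :
    Prop :=
  ∃ B : W → Set V,
    (∀ w, (G.induce (B w)).Connected) ∧
    (Pairwise fun w₁ w₂ => Disjoint (B w₁) (B w₂)) ∧
    ∀ ⦃w₁ w₂⦄, H.Adj w₁ w₂ → ∃ u ∈ B w₁, ∃ v ∈ B w₂, G.Adj u v

/-- A graph is outerplanar iff it has no `K₄` minor and no `K_{2,3}` minor
(Chartrand–Harary). -/
def Outerplanar {V : Type*} (G : SimpleGraph V) : Prop :=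
  ¬ (completeGraph (Fin 4)).IsMinorOf G ∧
  ¬ (completeBipartiteGraph (Fin 2) (Fin 3)).IsMinorOf G

/-- A graph is planar iff it has no `K₅` minor and no `K_{3,3}` minor (Wagner). -/
def Planar {V : Type*} (G : SimpleGraph V) : Prop :=
  ¬ (completeGraph (Fin 5)).IsMinorOf G ∧
  ¬ (completeBipartiteGraph (Fin 3) (Fin 3)).IsMinorOf G

/-- A maximal outerplanar graph: outerplanar, and adding any edge between two distinct
non-adjacent vertices destroys outerplanarity. -/
def MaximalOuterplanar {V : Type*} (G : SimpleGraph V) : Prop :=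
  Outerplanar G ∧ ∀ x y : V, x ≠ y → ¬ G.Adj x y →
    ¬ Outerplanar (G ⊔ fromEdgeSet {s(x, y)})

/-- The (normalized) graph Laplacian `Δf(v) = (1/d_v) ∑_{u ∈ N(v)} (f u - f v)`. -/
noncomputable def graphLap {V : Type*} (G : SimpleGraph V) [Fintype V] [DecidableRel G.Adj]
    (f : V → ℤ) (v : V) : ℝ :=
  (∑ u ∈ G.neighborFinset v, ((f u : ℝ) - (f v : ℝ))) / (G.degree v)

/-- The Lin–Lu–Yau curvature of the pair `(x, y)`, via the limit-free Laplacian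
formulation: the infimum of `Δf(x) - Δf(y)` over integer-valued functions `f` that are
`1`-Lipschitz w.r.t. the graph distance and satisfy `f y - f x = 1`. -/
noncomputable def llyCurv {V : Type*} (G : SimpleGraph V) [Fintype V] [DecidableRel G.Adj]
    (x y : V) : ℝ :=
  sInf { r : ℝ | ∃ f : V → ℤ,
    (∀ u v : V, |f u - f v| ≤ (G.dist u v : ℤ)) ∧
    f y - f x = 1 ∧
    r = graphLap G f x - graphLap G f y }


section Bridge
variable {V : Type*}

lemma sup_adj_cases {G : SimpleGraph V} {u₀ v₀ a b : V}
    (h : (G ⊔ fromEdgeSet {s(u₀,v₀)}).Adj a b) :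
    G.Adj a b ∨ (a = u₀ ∧ b = v₀) ∨ (a = v₀ ∧ b = u₀) := by
  rcases h with h | h
  · exact Or.inl h
  · rw [fromEdgeSet_adj] at h
    rcases h with ⟨hm, hne⟩
    simp only [Set.mem_singleton_iff, Sym2.eq_iff] at hm
    tauto

lemma induce_reachable {G : SimpleGraph V} {S : Set V} {a b : S}
    (h : (G.induce S).Reachable a b) : G.Reachable (a : V) (b : V) :=
  h.map (Embedding.induce S).toHom

lemma bridge_reach {G : SimpleGraph V} {u₀ v₀ : V} (hur : ¬ G.Reachable u₀ v₀)
    {a b : V} (h : (G ⊔ fromEdgeSet {s(u₀,v₀)}).Reachable a b) :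
    G.Reachable a b ∨ (G.Reachable a u₀ ∧ G.Reachable v₀ b) ∨
      (G.Reachable a v₀ ∧ G.Reachable u₀ b) := by
  obtain ⟨p⟩ := h
  induction p with
  | nil => exact Or.inl (Reachable.refl _)
  | cons h q ih =>
    rcases sup_adj_cases h with h' | ⟨rfl, rfl⟩ | ⟨rfl, rfl⟩
    · rcases ih with h2 | ⟨h2, h3⟩ | ⟨h2, h3⟩
      · exact Or.inl (h'.reachable.trans h2)
      · exact Or.inr (Or.inl ⟨h'.reachable.trans h2, h3⟩)
      · exact Or.inr (Or.inr ⟨h'.reachable.trans h2, h3⟩)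
    · rcases ih with h2 | ⟨h2, h3⟩ | ⟨h2, h3⟩
      · exact Or.inr (Or.inl ⟨Reachable.refl _, h2⟩)
      · exact absurd h2.symm hur
      · exact Or.inl h3
    · rcases ih with h2 | ⟨h2, h3⟩ | ⟨h2, h3⟩
      · exact Or.inr (Or.inr ⟨Reachable.refl _, h2⟩)
      · exact Or.inl h3
      · exact absurd h2 hur

lemma induce_connected_of_not_both {G : SimpleGraph V} {u₀ v₀ : V} {S : Set V}
    (h : ¬(u₀ ∈ S ∧ v₀ ∈ S))
    (hS : ((G ⊔ fromEdgeSet {s(u₀,v₀)}).induce S).Connected) : (G.induce S).Connected := by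
  have he : (G ⊔ fromEdgeSet {s(u₀,v₀)}).induce S = G.induce S := by
    ext a b
    constructor
    · intro hab
      rcases sup_adj_cases hab with h' | ⟨h1, h2⟩ | ⟨h1, h2⟩
      · exact h'
      · exact absurd ⟨h1 ▸ a.2, h2 ▸ b.2⟩ h
      · exact absurd ⟨h2 ▸ b.2, h1 ▸ a.2⟩ h
    · intro hab
      exact Or.inl hab
  rwa [he] at hS

lemma bridge_branch_connected {G : SimpleGraph V} {u₀ v₀ : V} (hur : ¬ G.Reachable u₀ v₀)
    {S : Set V} (hu : u₀ ∈ S) (hv : v₀ ∈ S)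
    (hS : ((G ⊔ fromEdgeSet {s(u₀,v₀)}).induce S).Connected) :
    (G.induce (S ∩ {t | G.Reachable u₀ t})).Connected := by
  set G' := G ⊔ fromEdgeSet {s(u₀,v₀)} with hG'
  set T : Set V := S ∩ {t | G.Reachable u₀ t} with hT
  have huT : u₀ ∈ T := ⟨hu, Reachable.refl _⟩
  have key : ∀ (a b : V) (p : G'.Walk a b), (∀ s ∈ p.support, s ∈ S) →
      ∀ (ha : a ∈ T), b = u₀ → (G.induce T).Reachable ⟨a, ha⟩ ⟨u₀, huT⟩ := by
    intro a b p
    induction p with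
    | nil =>
      intro _ ha hb
      subst hb
      exact Reachable.refl _
    | @cons a c b h q ih =>
      intro hsup ha hb
      rcases sup_adj_cases h with h' | ⟨h1, h2⟩ | ⟨h1, h2⟩
      · have hcS : c ∈ S := hsup c (by simp [Walk.support_cons])
        have hcT : c ∈ T := ⟨hcS, ha.2.trans h'.reachable⟩
        have hadj : (G.induce T).Adj ⟨a, ha⟩ ⟨c, hcT⟩ := h'
        exact hadj.reachable.trans
          (ih (fun s hs => hsup s (by simp [Walk.support_cons, hs])) hcT hb)
      · subst h1
        exact Reachable.refl _
      · exact absurd (h1 ▸ ha.2) hur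
  have hpre : (G.induce T).Preconnected := by
    rintro ⟨a, ha⟩ ⟨b, hb⟩
    obtain ⟨p1⟩ := hS.preconnected ⟨a, ha.1⟩ ⟨u₀, hu⟩
    obtain ⟨p2⟩ := hS.preconnected ⟨b, hb.1⟩ ⟨u₀, hu⟩
    have hs1 : ∀ s ∈ (p1.map (Embedding.induce S).toHom).support, s ∈ S := by
      intro s hs
      rw [Walk.support_map] at hs
      obtain ⟨t, _, rfl⟩ := List.mem_map.mp hs
      exact t.2
    have hs2 : ∀ s ∈ (p2.map (Embedding.induce S).toHom).support, s ∈ S := by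
      intro s hs
      rw [Walk.support_map] at hs
      obtain ⟨t, _, rfl⟩ := List.mem_map.mp hs
      exact t.2
    exact (key a u₀ _ hs1 ha rfl).trans (key b u₀ _ hs2 hb rfl).symm
  haveI : Nonempty T := ⟨⟨u₀, huT⟩⟩
  exact Connected.mk hpre

lemma bridge_minor {W : Type*} {G : SimpleGraph V} {u₀ v₀ : V} (hur : ¬ G.Reachable u₀ v₀)
    {H : SimpleGraph W}
    (hH1 : ∀ p q : W, H.Adj p q → (H.deleteEdges {s(p,q)}).Reachable p q)
    (hH2 : ∀ (r : W) (p q : ({t | t ≠ r} : Set W)), (H.induce {t | t ≠ r}).Reachable p q)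
    (hH3 : ∀ r : W, ∃ p, H.Adj r p)
    (hmin : H.IsMinorOf (G ⊔ fromEdgeSet {s(u₀,v₀)})) : H.IsMinorOf G := by
  classical
  obtain ⟨B, hconn, hdisj, hadj⟩ := hmin
  have memeq : ∀ {p q : W} {t : V}, t ∈ B p → t ∈ B q → p = q := by
    intro p q t hp hq
    by_contra h
    exact Set.disjoint_left.mp (hdisj h) hp hq
  have reachB : ∀ {p : W}, (G.induce (B p)).Connected →
      ∀ {a}, a ∈ B p → ∀ {b}, b ∈ B p → G.Reachable a b := by
    intro p hc a ha b hb
    exact induce_reachable (hc.preconnected ⟨a, ha⟩ ⟨b, hb⟩)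
  by_cases hsame : ∃ r, u₀ ∈ B r ∧ v₀ ∈ B r
  · -- Case B : both endpoints in one branch set
    obtain ⟨r, hu₀r, hv₀r⟩ := hsame
    have hother : ∀ p, p ≠ r → (G.induce (B p)).Connected := by
      intro p hp
      refine induce_connected_of_not_both (fun hc => ?_) (hconn p)
      exact hp (memeq hc.1 hu₀r)
    have hadjG : ∀ p q, H.Adj p q → ∃ a ∈ B p, ∃ b ∈ B q, G.Adj a b := by
      intro p q hpq
      obtain ⟨a, haB, b, hbB, hab⟩ := hadj hpq
      rcases sup_adj_cases hab with h' | ⟨h1, h2⟩ | ⟨h1, h2⟩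
      · exact ⟨a, haB, b, hbB, h'⟩
      · exact absurd ((memeq (h1 ▸ haB) hu₀r).trans (memeq hv₀r (h2 ▸ hbB))) hpq.ne
      · exact absurd ((memeq (h1 ▸ haB) hv₀r).trans (memeq hu₀r (h2 ▸ hbB))) hpq.ne
    have chain : ∀ (p q : ({t | t ≠ r} : Set W)) (wk : (H.induce {t | t ≠ r}).Walk p q),
        ∀ {a}, a ∈ B (p : W) → ∀ {b}, b ∈ B (q : W) → G.Reachable a b := by
      intro p q wk
      induction wk with
      | @nil p => intro a ha b hb; exact reachB (hother _ (by exact p.2)) ha hb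
      | @cons p c q h wk ih =>
        intro a ha b hb
        obtain ⟨s, hsB, t, htB, hst⟩ := hadjG _ _ h
        exact (reachB (hother _ (by exact p.2)) ha hsB).trans
          (hst.reachable.trans (ih htB hb))
    obtain ⟨n₀, hn₀⟩ := hH3 r
    obtain ⟨tstar, htstar, s₀, hs₀, hts⟩ := hadjG r n₀ hn₀
    have hreach_to : ∀ {q : W}, q ≠ r → ∀ {b}, b ∈ B q → G.Reachable s₀ b := by
      intro q hq b hb
      obtain ⟨wk⟩ := hH2 r ⟨n₀, hn₀.ne'⟩ ⟨q, hq⟩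
      exact chain _ _ wk hs₀ hb
    have main : ∀ (r₀ r₁ : V), s(r₀, r₁) = s(u₀, v₀) → ¬ G.Reachable r₀ r₁ →
        r₀ ∈ B r → r₁ ∈ B r → G.Reachable r₀ tstar → H.IsMinorOf G := by
      intro r₀ r₁ hsym hnr hr₀ hr₁ hrt
      have hG'eq : G ⊔ fromEdgeSet {s(u₀,v₀)} = G ⊔ fromEdgeSet {s(r₀,r₁)} := by
        rw [hsym]
      refine ⟨fun p => if p = r then B r ∩ {t | G.Reachable r₀ t} else B p, ?_, ?_, ?_⟩
      · intro p
        by_cases hp : p = r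
        · subst hp
          beta_reduce
          rw [if_pos rfl]
          exact bridge_branch_connected hnr hr₀ hr₁ (hG'eq ▸ hconn p)
        · beta_reduce; rw [if_neg hp]; exact hother p hp
      · intro p q hpq
        have h1 : (if p = r then B r ∩ {t | G.Reachable r₀ t} else B p) ⊆ B p := by
          by_cases hp : p = r
          · subst hp; simp
          · simp [hp]
        have h2 : (if q = r then B r ∩ {t | G.Reachable r₀ t} else B q) ⊆ B q := by
          by_cases hq : q = r
          · subst hq; simp
          · simp [hq]
        exact Set.disjoint_of_subset h1 h2 (hdisj hpq)
      · intro p q hpq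
        obtain ⟨a, haB, b, hbB, hab⟩ := hadjG p q hpq
        have hrs₀ : G.Reachable r₀ s₀ := hrt.trans hts.reachable
        by_cases hp : p = r
        · subst hp
          have hq : q ≠ p := hpq.ne'
          have hra : G.Reachable r₀ a :=
            (hrs₀.trans (hreach_to hq hbB)).trans hab.symm.reachable
          exact ⟨a, by simp only [if_pos rfl]; exact ⟨haB, hra⟩,
                 b, by simp only [if_neg hq]; exact hbB, hab⟩
        · by_cases hq : q = r
          · subst hq
            have hrb : G.Reachable r₀ b :=
              (hrs₀.trans (hreach_to hp haB)).trans hab.reachable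
            exact ⟨a, by simp only [if_neg hp]; exact haB,
                   b, by simp only [if_pos rfl]; exact ⟨hbB, hrb⟩, hab⟩
          · exact ⟨a, by simp only [if_neg hp]; exact haB,
                   b, by simp only [if_neg hq]; exact hbB, hab⟩
    have hside : G.Reachable u₀ tstar ∨ G.Reachable v₀ tstar := by
      have h2 : (G ⊔ fromEdgeSet {s(u₀,v₀)}).Reachable u₀ tstar :=
        induce_reachable ((hconn r).preconnected ⟨u₀, hu₀r⟩ ⟨tstar, htstar⟩)
      rcases bridge_reach hur h2 with h | ⟨_, h⟩ | ⟨h, _⟩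
      · exact Or.inl h
      · exact Or.inr h
      · exact absurd h hur
    rcases hside with h | h
    · exact main u₀ v₀ rfl hur hu₀r hv₀r h
    · exact main v₀ u₀ (Sym2.eq_swap) (fun hc => hur hc.symm) hv₀r hu₀r h
  · -- Case A : no branch set contains both
    have hGconn : ∀ p, (G.induce (B p)).Connected := fun p =>
      induce_connected_of_not_both (fun hc => hsame ⟨p, hc⟩) (hconn p)
    by_cases hall : ∀ p q, H.Adj p q → ∃ a ∈ B p, ∃ b ∈ B q, G.Adj a b
    · exact ⟨B, hGconn, hdisj, fun p q h => hall p q h⟩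
    · exfalso
      push_neg at hall
      obtain ⟨p₀, q₀, hpq₀, hno⟩ := hall
      obtain ⟨a, haB, b, hbB, hab⟩ := hadj hpq₀
      have horient : (u₀ ∈ B p₀ ∧ v₀ ∈ B q₀) ∨ (v₀ ∈ B p₀ ∧ u₀ ∈ B q₀) := by
        rcases sup_adj_cases hab with h' | ⟨h1, h2⟩ | ⟨h1, h2⟩
        · exact absurd h' (hno a haB b hbB)
        · exact Or.inl ⟨h1 ▸ haB, h2 ▸ hbB⟩
        · exact Or.inr ⟨h1 ▸ haB, h2 ▸ hbB⟩
      have hloc : ∀ c c' : W, u₀ ∈ B c → v₀ ∈ B c' → s(c, c') = s(p₀, q₀) := by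
        intro c c' hc hc'
        rcases horient with ⟨h1, h2⟩ | ⟨h1, h2⟩
        · rw [memeq hc h1, memeq hc' h2]
        · rw [memeq hc h2, memeq hc' h1, Sym2.eq_swap]
      have chainA : ∀ (c d : W) (wk : (H.deleteEdges {s(p₀,q₀)}).Walk c d),
          ∀ {a}, a ∈ B c → ∀ {b}, b ∈ B d → G.Reachable a b := by
        intro c d wk
        induction wk with
        | nil => intro a ha b hb; exact reachB (hGconn _) ha hb
        | @cons c c' d h wk ih =>
          intro a ha b hb
          rw [deleteEdges_adj] at h
          obtain ⟨s, hsB, t, htB, hst⟩ := hadj h.1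
          rcases sup_adj_cases hst with h' | ⟨h1, h2⟩ | ⟨h1, h2⟩
          · exact (reachB (hGconn c) ha hsB).trans (h'.reachable.trans (ih htB hb))
          · exact absurd (hloc c c' (h1 ▸ hsB) (h2 ▸ htB)) h.2
          · exact absurd ((Sym2.eq_swap).trans (hloc c' c (h2 ▸ htB) (h1 ▸ hsB))) h.2
      obtain ⟨wk⟩ := hH1 p₀ q₀ hpq₀
      rcases horient with ⟨h1, h2⟩ | ⟨h1, h2⟩
      · exact hur (chainA p₀ q₀ wk h1 h2)
      · exact hur (chainA p₀ q₀ wk h1 h2).symm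

-- hH3 for K4
lemma k4_h3 : ∀ r : Fin 4, ∃ p, (completeGraph (Fin 4)).Adj r p := by
  intro r
  obtain ⟨p, hp⟩ := exists_ne r
  exact ⟨p, hp.symm⟩

-- hH1 for K4
lemma k4_h1 : ∀ p q : Fin 4, (completeGraph (Fin 4)).Adj p q →
    ((completeGraph (Fin 4)).deleteEdges {s(p,q)}).Reachable p q := by
  intro p q hpq
  have hpq' : p ≠ q := hpq
  have : ∃ r : Fin 4, r ≠ p ∧ r ≠ q := by
    have hne : ({p, q}ᶜ : Finset (Fin 4)).Nonempty := by
      rw [← Finset.card_pos, Finset.card_compl]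
      have h2 : ({p, q} : Finset (Fin 4)).card ≤ 2 :=
        (Finset.card_insert_le _ _).trans (by simp)
      simp only [Fintype.card_fin]
      omega
    obtain ⟨r, hr⟩ := hne
    simp only [Finset.mem_compl, Finset.mem_insert, Finset.mem_singleton, not_or] at hr
    exact ⟨r, hr.1, hr.2⟩
  obtain ⟨r, hrp, hrq⟩ := this
  have h1 : ((completeGraph (Fin 4)).deleteEdges {s(p,q)}).Adj p r := by
    rw [deleteEdges_adj]
    refine ⟨hrp.symm, ?_⟩
    simp only [Set.mem_singleton_iff, Sym2.eq_iff]
    push_neg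
    constructor
    · intro _; exact hrq
    · intro hpq2; exact absurd hpq2 hpq'
  have h2 : ((completeGraph (Fin 4)).deleteEdges {s(p,q)}).Adj r q := by
    rw [deleteEdges_adj]
    refine ⟨hrq, ?_⟩
    simp only [Set.mem_singleton_iff, Sym2.eq_iff]
    push_neg
    constructor
    · intro hrp2; exact absurd hrp2 hrp
    · intro _; exact fun hc => hpq' hc.symm
  exact (h1.reachable).trans h2.reachable

-- hH2 for K4
lemma k4_h2 : ∀ (r : Fin 4) (p q : ({t | t ≠ r} : Set (Fin 4))),
    ((completeGraph (Fin 4)).induce {t | t ≠ r}).Reachable p q := by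
  intro r p q
  by_cases h : p = q
  · subst h; rfl
  · have : ((completeGraph (Fin 4)).induce {t | t ≠ r}).Adj p q := by
      simp only [comap_adj, Function.Embedding.coe_subtype, completeGraph]
      exact fun hc => h (Subtype.ext hc)
    exact this.reachable

local notation "K23" => completeBipartiteGraph (Fin 2) (Fin 3)

lemma k23_adj_iff (a b : Fin 2 ⊕ Fin 3) : (K23).Adj a b ↔
    ((∃ i j, a = Sum.inl i ∧ b = Sum.inr j) ∨ (∃ i j, a = Sum.inr j ∧ b = Sum.inl i)) := by
  cases a <;> cases b <;> simp [completeBipartiteGraph]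

lemma k23_h3 : ∀ r : Fin 2 ⊕ Fin 3, ∃ p, (K23).Adj r p := by
  intro r
  cases r with
  | inl i => exact ⟨Sum.inr 0, by simp [completeBipartiteGraph]⟩
  | inr j => exact ⟨Sum.inl 0, by simp [completeBipartiteGraph]⟩

lemma k23_h1 : ∀ p q : Fin 2 ⊕ Fin 3, (K23).Adj p q →
    ((K23).deleteEdges {s(p,q)}).Reachable p q := by
  have core : ∀ (i : Fin 2) (j : Fin 3),
      ((K23).deleteEdges {s(Sum.inl i, Sum.inr j)}).Reachable (Sum.inl i) (Sum.inr j) := by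
    intro i j
    obtain ⟨i', hi'⟩ := exists_ne i
    obtain ⟨j', hj'⟩ := exists_ne j
    have h1 : ((K23).deleteEdges {s(Sum.inl i, Sum.inr j)}).Adj (Sum.inl i) (Sum.inr j') := by
      rw [deleteEdges_adj]
      constructor
      · simp [completeBipartiteGraph]
      · simp only [Set.mem_singleton_iff, Sym2.eq_iff]
        push_neg
        refine ⟨fun _ h => hj' (Sum.inr.inj h), fun h => absurd h (by simp)⟩
    have h2 : ((K23).deleteEdges {s(Sum.inl i, Sum.inr j)}).Adj (Sum.inr j') (Sum.inl i') := by
      rw [deleteEdges_adj]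
      constructor
      · simp [completeBipartiteGraph]
      · simp only [Set.mem_singleton_iff, Sym2.eq_iff]
        push_neg
        refine ⟨fun h => absurd h (by simp), fun h => absurd (Sum.inr.inj h) hj'⟩
    have h3 : ((K23).deleteEdges {s(Sum.inl i, Sum.inr j)}).Adj (Sum.inl i') (Sum.inr j) := by
      rw [deleteEdges_adj]
      constructor
      · simp [completeBipartiteGraph]
      · simp only [Set.mem_singleton_iff, Sym2.eq_iff]
        push_neg
        refine ⟨fun h => hi' (Sum.inl.inj h), fun h => absurd h (by simp)⟩
    exact h1.reachable.trans (h2.reachable.trans h3.reachable)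
  intro p q hpq
  rcases (k23_adj_iff p q).mp hpq with ⟨i, j, rfl, rfl⟩ | ⟨i, j, rfl, rfl⟩
  · exact core i j
  · rw [Sym2.eq_swap]
    exact (core i j).symm
  
lemma k23_h2 : ∀ (r : Fin 2 ⊕ Fin 3) (p q : ({t | t ≠ r} : Set (Fin 2 ⊕ Fin 3))),
    ((K23).induce {t | t ≠ r}).Reachable p q := by
  intro r p q
  obtain ⟨a, ha⟩ := p
  obtain ⟨b, hb⟩ := q
  have adj_of : ∀ (a b : Fin 2 ⊕ Fin 3) (ha : a ∈ ({t | t ≠ r} : Set (Fin 2 ⊕ Fin 3)))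
      (hb : b ∈ ({t | t ≠ r} : Set (Fin 2 ⊕ Fin 3))), (K23).Adj a b →
      ((K23).induce {t | t ≠ r}).Adj ⟨a, ha⟩ ⟨b, hb⟩ := fun a b ha hb h => h
  by_cases hab : a = b
  · subst hab
    rfl
  cases a with
  | inl i =>
    cases b with
    | inl i' =>
      have : ∃ j : Fin 3, Sum.inr j ≠ r := by
        cases r with
        | inl _ => exact ⟨0, by simp⟩
        | inr j₀ => obtain ⟨j, hj⟩ := exists_ne j₀; exact ⟨j, by simp [hj]⟩
      obtain ⟨j, hj⟩ := this
      exact ((adj_of _ _ ha hj (by simp [completeBipartiteGraph])).reachable).trans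
        (adj_of _ _ hj hb (by simp [completeBipartiteGraph])).reachable
    | inr j' => exact (adj_of _ _ ha hb (by simp [completeBipartiteGraph])).reachable
  | inr j =>
    cases b with
    | inl i' => exact (adj_of _ _ ha hb (by simp [completeBipartiteGraph])).reachable
    | inr j' =>
      have : ∃ i : Fin 2, Sum.inl i ≠ r := by
        cases r with
        | inr _ => exact ⟨0, by simp⟩
        | inl i₀ => obtain ⟨i, hi⟩ := exists_ne i₀; exact ⟨i, by simp [hi]⟩
      obtain ⟨i, hi⟩ := this
      exact ((adj_of _ _ ha hi (by simp [completeBipartiteGraph])).reachable).trans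
        (adj_of _ _ hi hb (by simp [completeBipartiteGraph])).reachable


lemma maxOuter_preconnected {G : SimpleGraph V} (hmax : MaximalOuterplanar G) :
    G.Preconnected := by
  intro a b
  by_contra hur
  have hne : a ≠ b := fun h => hur (h ▸ Reachable.refl a)
  have hnadj : ¬ G.Adj a b := fun h => hur h.reachable
  have h2 := hmax.2 a b hne hnadj
  rw [Outerplanar, not_and_or, not_not, not_not] at h2
  rcases h2 with h2 | h2
  · exact hmax.1.1 (bridge_minor hur k4_h1 k4_h2 k4_h3 h2)
  · exact hmax.1.2 (bridge_minor hur k23_h1 k23_h2 k23_h3 h2)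



lemma induce_singleton_connected (G : SimpleGraph V) (v : V) :
    (G.induce {v}).Connected := by
  haveI : Nonempty ({v} : Set V) := ⟨⟨v, rfl⟩⟩
  refine Connected.mk ?_
  rintro ⟨a, ha⟩ ⟨b, hb⟩
  rw [Set.mem_singleton_iff] at ha hb
  subst ha; subst hb; rfl

lemma induce_triple_connected (G : SimpleGraph V) {a c b : V}
    (h1 : G.Adj a c) (h2 : G.Adj c b) : (G.induce {a, c, b}).Connected := by
  have hc : c ∈ ({a, c, b} : Set V) := by simp
  haveI : Nonempty ({a, c, b} : Set V) := ⟨⟨c, hc⟩⟩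
  have key : ∀ (t : V) (ht : t ∈ ({a, c, b} : Set V)),
      (G.induce {a, c, b}).Reachable ⟨t, ht⟩ ⟨c, hc⟩ := by
    intro t ht
    rcases ht with rfl | rfl | rfl
    · exact Adj.reachable (by exact h1)
    · rfl
    · exact Adj.reachable (by exact h2.symm)
  refine Connected.mk ?_
  rintro ⟨t, ht⟩ ⟨s, hs⟩
  exact (key t ht).trans (key s hs).symm

lemma induce_pair_connected (G : SimpleGraph V) {a b : V}
    (h1 : G.Adj a b) : (G.induce {a, b}).Connected := by
  have hb : b ∈ ({a, b} : Set V) := by simp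
  haveI : Nonempty ({a, b} : Set V) := ⟨⟨b, hb⟩⟩
  have key : ∀ (t : V) (ht : t ∈ ({a, b} : Set V)),
      (G.induce {a, b}).Reachable ⟨t, ht⟩ ⟨b, hb⟩ := by
    intro t ht
    rcases ht with rfl | rfl
    · exact Adj.reachable (by exact h1)
    · rfl
  refine Connected.mk ?_
  rintro ⟨t, ht⟩ ⟨s, hs⟩
  exact (key t ht).trans (key s hs).symm

lemma no_k23_aux (G : SimpleGraph V) (x y w z : V)
    (hxw : G.Adj x w) (hxz : G.Adj x z) (hyw : G.Adj y w) (hyz : G.Adj y z)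
    (hxy : x ≠ y) (hwz : w ≠ z)
    (P : Set V) (hPconn : (G.induce P).Connected)
    (hPdisj : ∀ t ∈ P, t ≠ x ∧ t ≠ y ∧ t ≠ w ∧ t ≠ z)
    (ha : ∃ a ∈ P, G.Adj x a) (hb : ∃ b ∈ P, G.Adj y b) :
    (completeBipartiteGraph (Fin 2) (Fin 3)).IsMinorOf G := by
  obtain ⟨a, haP, hxa⟩ := ha
  obtain ⟨b, hbP, hyb⟩ := hb
  have hxP : x ∉ P := fun h => (hPdisj x h).1 rfl
  have hyP : y ∉ P := fun h => (hPdisj y h).2.1 rfl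
  have hwP : w ∉ P := fun h => (hPdisj w h).2.2.1 rfl
  have hzP : z ∉ P := fun h => (hPdisj z h).2.2.2 rfl
  have hxw' : x ≠ w := hxw.ne
  have hxz' : x ≠ z := hxz.ne
  have hyw' : y ≠ w := hyw.ne
  have hyz' : y ≠ z := hyz.ne
  refine ⟨Sum.elim ![{x}, {y}] ![{w}, {z}, P], ?_, ?_, ?_⟩
  · rintro (i | j)
    · fin_cases i
      · simpa using induce_singleton_connected G x
      · simpa using induce_singleton_connected G y
    · fin_cases j
      · simpa using induce_singleton_connected G w
      · simpa using induce_singleton_connected G z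
      · simpa using hPconn
  · rintro (i | j) (i' | j') hne
    · fin_cases i <;> fin_cases i' <;>
        simp_all [Set.disjoint_singleton, hxy, hxy.symm]
    · fin_cases i <;> fin_cases j' <;>
        simp_all [Set.disjoint_singleton, Set.disjoint_singleton_left]
    · fin_cases j <;> fin_cases i' <;>
        simp_all [Set.disjoint_singleton, Set.disjoint_singleton_right, ne_comm]
    · fin_cases j <;> fin_cases j' <;>
        simp_all [Set.disjoint_singleton, Set.disjoint_singleton_left,
          Set.disjoint_singleton_right, hwz, hwz.symm]
  · rintro (i | j) (i' | j') hadj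
    · simp [completeBipartiteGraph] at hadj
    · fin_cases i <;> fin_cases j'
      · exact ⟨x, by simp, w, by simp, hxw⟩
      · exact ⟨x, by simp, z, by simp, hxz⟩
      · exact ⟨x, by simp, a, by simpa using haP, hxa⟩
      · exact ⟨y, by simp, w, by simp, hyw⟩
      · exact ⟨y, by simp, z, by simp, hyz⟩
      · exact ⟨y, by simp, b, by simpa using hbP, hyb⟩
    · fin_cases j <;> fin_cases i'
      · exact ⟨w, by simp, x, by simp, hxw.symm⟩
      · exact ⟨w, by simp, y, by simp, hyw.symm⟩
      · exact ⟨z, by simp, x, by simp, hxz.symm⟩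
      · exact ⟨z, by simp, y, by simp, hyz.symm⟩
      · exact ⟨a, by simpa using haP, x, by simp, hxa.symm⟩
      · exact ⟨b, by simpa using hbP, y, by simp, hyb.symm⟩
    · simp [completeBipartiteGraph] at hadj

end Bridge

/-- interior edge `xy` with common neighbors `w ≠ z`, where
`δ_xw = 0`, `δ_xz = 0`, `δ_yw = 0`, `δ_yz = 0`. -/
theorem interior_config_9 {V : Type*} [Fintype V]
    (G : SimpleGraph V) [DecidableRel G.Adj]
    (hmax : MaximalOuterplanar G)
    (x y w z : V) (hxy : G.Adj x y) (hd : G.degree x ≤ G.degree y)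
    (hwz : w ≠ z)
    (hcom : G.neighborSet x ∩ G.neighborSet y = {w, z})
    (hxw : ((G.neighborSet x ∩ G.neighborSet w) \ {y}).ncard = 0)
    (hxz : ((G.neighborSet x ∩ G.neighborSet z) \ {y}).ncard = 0)
    (hyw : ((G.neighborSet y ∩ G.neighborSet w) \ {x}).ncard = 0)
    (hyz : ((G.neighborSet y ∩ G.neighborSet z) \ {x}).ncard = 0) :
    llyCurv G x y = 4 / (G.degree x : ℝ) + 6 / (G.degree y : ℝ) - 2 := by
  classical
  -- adjacency facts
  have hwmem : w ∈ G.neighborSet x ∩ G.neighborSet y := by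
    rw [hcom]; exact Set.mem_insert _ _
  have hzmem : z ∈ G.neighborSet x ∩ G.neighborSet y := by
    rw [hcom]; exact Set.mem_insert_of_mem _ rfl
  have axw : G.Adj x w := hwmem.1
  have ayw : G.Adj y w := hwmem.2
  have axz : G.Adj x z := hzmem.1
  have ayz : G.Adj y z := hzmem.2
  have hcom' : ∀ v, G.Adj x v → G.Adj y v → v = w ∨ v = z := by
    intro v h1 h2
    have hv : v ∈ G.neighborSet x ∩ G.neighborSet y := ⟨h1, h2⟩
    rw [hcom] at hv
    exact hv
  have exw : ∀ v, G.Adj x v → G.Adj w v → v = y := by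
    intro v h1 h2
    by_contra hne
    have hv : v ∈ (G.neighborSet x ∩ G.neighborSet w) \ {y} := ⟨⟨h1, h2⟩, hne⟩
    rw [Set.ncard_eq_zero (Set.toFinite _)] at hxw
    rw [hxw] at hv
    exact hv
  have exz : ∀ v, G.Adj x v → G.Adj z v → v = y := by
    intro v h1 h2
    by_contra hne
    have hv : v ∈ (G.neighborSet x ∩ G.neighborSet z) \ {y} := ⟨⟨h1, h2⟩, hne⟩
    rw [Set.ncard_eq_zero (Set.toFinite _)] at hxz
    rw [hxz] at hv
    exact hv
  have eyw : ∀ v, G.Adj y v → G.Adj w v → v = x := by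
    intro v h1 h2
    by_contra hne
    have hv : v ∈ (G.neighborSet y ∩ G.neighborSet w) \ {x} := ⟨⟨h1, h2⟩, hne⟩
    rw [Set.ncard_eq_zero (Set.toFinite _)] at hyw
    rw [hyw] at hv
    exact hv
  have eyz : ∀ v, G.Adj y v → G.Adj z v → v = x := by
    intro v h1 h2
    by_contra hne
    have hv : v ∈ (G.neighborSet y ∩ G.neighborSet z) \ {x} := ⟨⟨h1, h2⟩, hne⟩
    rw [Set.ncard_eq_zero (Set.toFinite _)] at hyz
    rw [hyz] at hv
    exact hv
  have hconn : G.Connected := by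
    haveI : Nonempty V := ⟨x⟩
    exact Connected.mk (maxOuter_preconnected hmax)
  -- distance helpers
  have dist1 : ∀ {u v : V}, G.Adj u v → G.dist u v = 1 := by
    intro u v h
    exact dist_eq_one_iff_adj.mpr h
  have distpos : ∀ {u v : V}, u ≠ v → 1 ≤ G.dist u v := by
    intro u v h
    have := (hconn.dist_eq_zero_iff (u := u) (v := v)).not.mpr h
    omega
  have dist2 : ∀ {u v : V}, u ≠ v → ¬ G.Adj u v → 2 ≤ G.dist u v := by
    intro u v h hna
    have h0 := (hconn.dist_eq_zero_iff (u := u) (v := v)).not.mpr h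
    have h1 : G.dist u v ≠ 1 := fun hc => hna (dist_eq_one_iff_adj.mp hc)
    omega
  -- distinctness
  have nxy : x ≠ y := hxy.ne
  have nxw : x ≠ w := axw.ne
  have nxz : x ≠ z := axz.ne
  have nyw : y ≠ w := ayw.ne
  have nyz : y ≠ z := ayz.ne
  -- private neighbor finsets
  set A : Finset V := G.neighborFinset x \ {y, w, z} with hA
  set Bf : Finset V := G.neighborFinset y \ {x, w, z} with hBf
  have hAmem : ∀ a ∈ A, G.Adj x a ∧ a ≠ y ∧ a ≠ w ∧ a ≠ z := by
    intro a ha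
    rw [hA, Finset.mem_sdiff, mem_neighborFinset] at ha
    simp only [Finset.mem_insert, Finset.mem_singleton, not_or] at ha
    exact ⟨ha.1, ha.2.1, ha.2.2.1, ha.2.2.2⟩
  have hBmem : ∀ b ∈ Bf, G.Adj y b ∧ b ≠ x ∧ b ≠ w ∧ b ≠ z := by
    intro b hb
    rw [hBf, Finset.mem_sdiff, mem_neighborFinset] at hb
    simp only [Finset.mem_insert, Finset.mem_singleton, not_or] at hb
    exact ⟨hb.1, hb.2.1, hb.2.2.1, hb.2.2.2⟩
  have hAy : ∀ a ∈ A, ¬ G.Adj y a := by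
    intro a ha hya
    obtain ⟨h1, h2, h3, h4⟩ := hAmem a ha
    rcases hcom' a h1 hya with rfl | rfl
    · exact h3 rfl
    · exact h4 rfl
  have hBx : ∀ b ∈ Bf, ¬ G.Adj x b := by
    intro b hb hxb
    obtain ⟨h1, h2, h3, h4⟩ := hBmem b hb
    rcases hcom' b hxb h1 with rfl | rfl
    · exact h3 rfl
    · exact h4 rfl
  have hAB : ∀ a ∈ A, a ∉ Bf := by
    intro a ha hb
    exact hBx a hb (hAmem a ha).1
  have hAw : ∀ a ∈ A, ¬ G.Adj w a := by
    intro a ha hwa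
    exact (hAmem a ha).2.1 (exw a (hAmem a ha).1 hwa)
  have hAz : ∀ a ∈ A, ¬ G.Adj z a := by
    intro a ha hza
    exact (hAmem a ha).2.1 (exz a (hAmem a ha).1 hza)
  have hBw : ∀ b ∈ Bf, ¬ G.Adj w b := by
    intro b hb hwb
    exact (hBmem b hb).2.1 (eyw b (hBmem b hb).1 hwb)
  have hBz : ∀ b ∈ Bf, ¬ G.Adj z b := by
    intro b hb hzb
    exact (hBmem b hb).2.1 (eyz b (hBmem b hb).1 hzb)
  -- neighborhood decompositions
  have hNx : G.neighborFinset x = insert y (insert w (insert z A)) := by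
    ext u
    simp only [Finset.mem_insert, hA, Finset.mem_sdiff, mem_neighborFinset,
      Finset.mem_insert, Finset.mem_singleton, not_or]
    constructor
    · intro h
      by_cases h1 : u = y
      · exact Or.inl h1
      by_cases h2 : u = w
      · exact Or.inr (Or.inl h2)
      by_cases h3 : u = z
      · exact Or.inr (Or.inr (Or.inl h3))
      exact Or.inr (Or.inr (Or.inr ⟨h, h1, h2, h3⟩))
    · rintro (rfl | rfl | rfl | ⟨h, -⟩)
      · exact hxy
      · exact axw
      · exact axz
      · exact h
  have hNy : G.neighborFinset y = insert x (insert w (insert z Bf)) := by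
    ext u
    simp only [Finset.mem_insert, hBf, Finset.mem_sdiff, mem_neighborFinset,
      Finset.mem_insert, Finset.mem_singleton, not_or]
    constructor
    · intro h
      by_cases h1 : u = x
      · exact Or.inl h1
      by_cases h2 : u = w
      · exact Or.inr (Or.inl h2)
      by_cases h3 : u = z
      · exact Or.inr (Or.inr (Or.inl h3))
      exact Or.inr (Or.inr (Or.inr ⟨h, h1, h2, h3⟩))
    · rintro (rfl | rfl | rfl | ⟨h, -⟩)
      · exact hxy.symm
      · exact ayw
      · exact ayz
      · exact h
  have hyA : y ∉ insert w (insert z A) := by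
    simp only [Finset.mem_insert, not_or]
    exact ⟨nyw, nyz, fun hc => (hAmem y hc).2.1 rfl⟩
  have hwA : w ∉ insert z A := by
    simp only [Finset.mem_insert, not_or]
    exact ⟨hwz, fun hc => (hAmem w hc).2.2.1 rfl⟩
  have hzA : z ∉ A := fun hc => (hAmem z hc).2.2.2 rfl
  have hxB : x ∉ insert w (insert z Bf) := by
    simp only [Finset.mem_insert, not_or]
    exact ⟨nxw, nxz, fun hc => (hBmem x hc).2.1 rfl⟩
  have hwB : w ∉ insert z Bf := by
    simp only [Finset.mem_insert, not_or]
    exact ⟨hwz, fun hc => (hBmem w hc).2.2.1 rfl⟩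
  have hzB : z ∉ Bf := fun hc => (hBmem z hc).2.2.2 rfl
  have hdegx : G.degree x = 3 + A.card := by
    rw [← card_neighborFinset_eq_degree, hNx, Finset.card_insert_of_notMem hyA,
      Finset.card_insert_of_notMem hwA, Finset.card_insert_of_notMem hzA]
    ring
  have hdegy : G.degree y = 3 + Bf.card := by
    rw [← card_neighborFinset_eq_degree, hNy, Finset.card_insert_of_notMem hxB,
      Finset.card_insert_of_notMem hwB, Finset.card_insert_of_notMem hzB]
    ring
  -- distance ≥ 3 between private neighbors
  have hdist3 : ∀ a ∈ A, ∀ b ∈ Bf, 3 ≤ G.dist a b := by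
    intro a ha b hb
    obtain ⟨hxa, hay, haw, haz⟩ := hAmem a ha
    obtain ⟨hyb, hbx, hbw, hbz⟩ := hBmem b hb
    have hax : a ≠ x := hxa.ne'
    have hby : b ≠ y := hyb.ne'
    have hab : a ≠ b := by
      rintro rfl
      exact hBx a hb hxa
    by_contra hlt
    push_neg at hlt
    have h0 : G.dist a b ≠ 0 := fun hc => hab ((hconn.dist_eq_zero_iff).mp hc)
    have hK : (completeBipartiteGraph (Fin 2) (Fin 3)).IsMinorOf G := by
      rcases (by omega : G.dist a b = 1 ∨ G.dist a b = 2) with h1 | h2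
      · -- adjacent: P = {a, b}
        have hadj : G.Adj a b := dist_eq_one_iff_adj.mp h1
        refine no_k23_aux G x y w z axw axz ayw ayz nxy hwz {a, b}
          (induce_pair_connected G hadj) ?_ ⟨a, by simp, hxa⟩ ⟨b, by simp, hyb⟩
        rintro t (rfl | rfl)
        · exact ⟨hax, hay, haw, haz⟩
        · exact ⟨hbx, hby, hbw, hbz⟩
      · -- distance two: midpoint c
        obtain ⟨p, hp⟩ := exists_walk_of_dist_ne_zero h0
        rw [h2] at hp
        obtain ⟨c, hac, hcb⟩ : ∃ c, G.Adj a c ∧ G.Adj c b := by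
          cases p with
          | nil => simp at hp
          | cons h q =>
            cases q with
            | nil => simp at hp
            | cons h2' q2 =>
              cases q2 with
              | nil => exact ⟨_, h, h2'⟩
              | cons h3 q3 => exfalso; simp only [Walk.length_cons] at hp; omega
        have hcx : c ≠ x := by
          rintro rfl
          have : b = w ∨ b = z := hcom' b hcb hyb
          rcases this with rfl | rfl
          · exact hbw rfl
          · exact hbz rfl
        have hcy : c ≠ y := by
          rintro rfl
          have : a = w ∨ a = z := hcom' a hxa hac.symm
          rcases this with rfl | rfl
          · exact haw rfl
          · exact haz rfl
        have hcw : c ≠ w := by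
          rintro rfl
          exact hay (exw a hxa hac.symm)
        have hcz : c ≠ z := by
          rintro rfl
          exact hay (exz a hxa hac.symm)
        refine no_k23_aux G x y w z axw axz ayw ayz nxy hwz {a, c, b}
          (induce_triple_connected G hac hcb) ?_ ⟨a, by simp, hxa⟩ ⟨b, by simp, hyb⟩
        rintro t (rfl | rfl | rfl)
        · exact ⟨hax, hay, haw, haz⟩
        · exact ⟨hcx, hcy, hcw, hcz⟩
        · exact ⟨hbx, hby, hbw, hbz⟩
    exact hmax.1.2 hK
  -- the anchor set and anchor values
  set S : Finset V := insert x (insert y (insert w (insert z (A ∪ Bf)))) with hS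
  have hxS : x ∈ S := by simp [hS]
  have hyS : y ∈ S := by simp [hS]
  have hwS : w ∈ S := by simp [hS]
  have hzS : z ∈ S := by simp [hS]
  have hAS : ∀ a ∈ A, a ∈ S := by intro a ha; simp [hS, ha]
  have hBS : ∀ b ∈ Bf, b ∈ S := by intro b hb; simp [hS, hb]
  have hSmem : ∀ t ∈ S, t = x ∨ t = y ∨ t = w ∨ t = z ∨ t ∈ A ∨ t ∈ Bf := by
    intro t ht
    simp only [hS, Finset.mem_insert, Finset.mem_union] at ht
    tauto
  set c : V → ℤ := fun v => if v = x then 0 else if v = y then 1 else if v = w then 0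
    else if v = z then 0 else if v ∈ A then -1 else 2 with hc
  have hcx : c x = 0 := by simp [hc]
  have hcy : c y = 1 := by rw [hc]; simp [Ne.symm nxy]
  have hcw : c w = 0 := by rw [hc]; simp [Ne.symm nxw, Ne.symm nyw]
  have hcz : c z = 0 := by rw [hc]; simp [Ne.symm nxz, Ne.symm nyz, Ne.symm hwz]
  have hca : ∀ a ∈ A, c a = -1 := by
    intro a ha
    obtain ⟨h1, h2, h3, h4⟩ := hAmem a ha
    rw [hc]
    simp [h1.ne', h2, h3, h4, ha]
  have hcb : ∀ b ∈ Bf, c b = 2 := by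
    intro b hb
    obtain ⟨h1, h2, h3, h4⟩ := hBmem b hb
    have hbA : b ∉ A := fun hbA => hAB b hbA hb
    rw [hc]
    simp [h1.ne', h2, h3, h4, hbA]
  have hclb : ∀ t ∈ S, -1 ≤ c t := by
    intro t ht
    rcases hSmem t ht with h | h | h | h | h | h
    · rw [h, hcx]; norm_num
    · rw [h, hcy]; norm_num
    · rw [h, hcw]; norm_num
    · rw [h, hcz]; norm_num
    · rw [hca t h]
    · rw [hcb t h]; norm_num
  -- consistency of anchor values
  have con : ∀ t ∈ S, ∀ t' ∈ S, c t - c t' ≤ (G.dist t' t : ℤ) := by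
    intro t ht t' ht'
    have hnn : (0 : ℤ) ≤ (G.dist t' t : ℤ) := Int.natCast_nonneg _
    rcases hSmem t ht with h | h | h | h | hta | htb
    · -- t = x
      rcases hSmem t' ht' with h' | h' | h' | h' | h2 | h2
      · rw [h, h', hcx]; omega
      · rw [h, h', hcx, hcy]; omega
      · rw [h, h', hcx, hcw]; omega
      · rw [h, h', hcx, hcz]; omega
      · have hd := distpos (show t' ≠ x from ((hAmem t' h2).1).ne')
        rw [h, hcx, hca t' h2]; omega
      · rw [h, hcx, hcb t' h2]; omega
    · -- t = y
      rcases hSmem t' ht' with h' | h' | h' | h' | h2 | h2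
      · have hd := dist1 hxy
        rw [h, h', hcy, hcx, hd]; omega
      · rw [h, h', hcy]; omega
      · have hd := dist1 ayw.symm
        rw [h, h', hcy, hcw, hd]; omega
      · have hd := dist1 ayz.symm
        rw [h, h', hcy, hcz, hd]; omega
      · have hd := dist2 (show t' ≠ y from (hAmem t' h2).2.1)
          (fun hadj => hAy t' h2 hadj.symm)
        rw [h, hcy, hca t' h2]; omega
      · rw [h, hcy, hcb t' h2]; omega
    · -- t = w
      rcases hSmem t' ht' with h' | h' | h' | h' | h2 | h2
      · rw [h, h', hcw, hcx]; omega
      · rw [h, h', hcw, hcy]; omega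
      · rw [h, h', hcw]; omega
      · rw [h, h', hcw, hcz]; omega
      · have hd := distpos (show t' ≠ w from (hAmem t' h2).2.2.1)
        rw [h, hcw, hca t' h2]; omega
      · rw [h, hcw, hcb t' h2]; omega
    · -- t = z
      rcases hSmem t' ht' with h' | h' | h' | h' | h2 | h2
      · rw [h, h', hcz, hcx]; omega
      · rw [h, h', hcz, hcy]; omega
      · rw [h, h', hcz, hcw]; omega
      · rw [h, h', hcz]; omega
      · have hd := distpos (show t' ≠ z from (hAmem t' h2).2.2.2)
        rw [h, hcz, hca t' h2]; omega
      · rw [h, hcz, hcb t' h2]; omega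
    · -- t ∈ A
      have h1 := hclb t' ht'
      rw [hca t hta]; omega
    · -- t ∈ Bf
      obtain ⟨hb1, hb2, hb3, hb4⟩ := hBmem t htb
      rcases hSmem t' ht' with h' | h' | h' | h' | h2 | h2
      · have hd := dist2 (Ne.symm hb2) (hBx t htb)
        rw [h', hcb t htb, hcx]; omega
      · have hd := distpos (show y ≠ t from hb1.ne)
        rw [h', hcb t htb, hcy]; omega
      · have hd := dist2 (Ne.symm hb3) (hBw t htb)
        rw [h', hcb t htb, hcw]; omega
      · have hd := dist2 (Ne.symm hb4) (hBz t htb)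
        rw [h', hcb t htb, hcz]; omega
      · have hd := hdist3 t' h2 t htb
        rw [hcb t htb, hca t' h2]; omega
      · have h2' := hcb t' h2
        rw [hcb t htb, h2']; omega
  -- the optimal Lipschitz function
  have hSne : S.Nonempty := ⟨x, hxS⟩
  set f : V → ℤ := fun v => S.sup' hSne (fun t => c t - (G.dist v t : ℤ)) with hf
  have hfub : ∀ v : V, ∀ t ∈ S, c t - (G.dist v t : ℤ) ≤ f v := by
    intro v t ht
    rw [hf]
    exact Finset.le_sup' (fun t => c t - (G.dist v t : ℤ)) ht
  have hfle : ∀ v : V, ∀ M : ℤ, (∀ t ∈ S, c t - (G.dist v t : ℤ) ≤ M) → f v ≤ M := by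
    intro v M h
    rw [hf]
    exact Finset.sup'_le _ _ h
  have hfval : ∀ v ∈ S, f v = c v := by
    intro v hv
    refine le_antisymm (hfle v (c v) ?_) ?_
    · intro u hu
      have := con u hu v hv
      omega
    · have h0 := hfub v v hv
      rw [SimpleGraph.dist_self] at h0
      omega
  have hlip1 : ∀ u v : V, f u - f v ≤ (G.dist u v : ℤ) := by
    intro u v
    have : f u ≤ f v + (G.dist u v : ℤ) := by
      refine hfle u _ (fun s hs => ?_)
      have h2 := hfub v s hs
      have h3 : G.dist v s ≤ G.dist v u + G.dist u s := hconn.dist_triangle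
      have h4 : G.dist v u = G.dist u v := SimpleGraph.dist_comm
      omega
    omega
  have hlip : ∀ u v : V, |f u - f v| ≤ (G.dist u v : ℤ) := by
    intro u v
    rw [abs_sub_le_iff]
    refine ⟨hlip1 u v, ?_⟩
    have := hlip1 v u
    rwa [SimpleGraph.dist_comm] at this
  have hfx : f x = 0 := by rw [hfval x hxS, hcx]
  have hfy : f y = 1 := by rw [hfval y hyS, hcy]
  have hfw : f w = 0 := by rw [hfval w hwS, hcw]
  have hfz : f z = 0 := by rw [hfval z hzS, hcz]
  have hfa : ∀ a ∈ A, f a = -1 := fun a ha => by rw [hfval a (hAS a ha), hca a ha]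
  have hfb : ∀ b ∈ Bf, f b = 2 := fun b hb => by rw [hfval b (hBS b hb), hcb b hb]
  -- sums for f
  have hsx : ∑ u ∈ G.neighborFinset x, ((f u : ℝ) - (f x : ℝ)) = 4 - (G.degree x : ℝ) := by
    rw [hNx, Finset.sum_insert hyA, Finset.sum_insert hwA, Finset.sum_insert hzA]
    have hAsum : ∑ u ∈ A, ((f u : ℝ) - (f x : ℝ)) = ∑ u ∈ A, (-1 : ℝ) :=
      Finset.sum_congr rfl (fun u hu => by rw [hfa u hu, hfx]; norm_num)
    rw [hAsum, Finset.sum_const, hfy, hfw, hfz, hfx, hdegx]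
    push_cast
    ring
  have hsy : ∑ u ∈ G.neighborFinset y, ((f u : ℝ) - (f y : ℝ)) = (G.degree y : ℝ) - 6 := by
    rw [hNy, Finset.sum_insert hxB, Finset.sum_insert hwB, Finset.sum_insert hzB]
    have hBsum : ∑ u ∈ Bf, ((f u : ℝ) - (f y : ℝ)) = ∑ u ∈ Bf, (1 : ℝ) :=
      Finset.sum_congr rfl (fun u hu => by rw [hfb u hu, hfy]; norm_num)
    rw [hBsum, Finset.sum_const, hfx, hfw, hfz, hfy, hdegy]
    push_cast
    ring
  have hdx0 : (G.degree x : ℝ) ≠ 0 := by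
    rw [hdegx]; push_cast; exact (by have h0 : (0:ℝ) ≤ (A.card:ℝ) := Nat.cast_nonneg _; linarith : (0:ℝ) < 3 + A.card).ne'
  have hdy0 : (G.degree y : ℝ) ≠ 0 := by
    rw [hdegy]; push_cast; exact (by have h0 : (0:ℝ) ≤ (Bf.card:ℝ) := Nat.cast_nonneg _; linarith : (0:ℝ) < 3 + Bf.card).ne'
  have hdxpos : (0 : ℝ) < (G.degree x : ℝ) := by
    rw [hdegx]; push_cast; have h0 : (0:ℝ) ≤ (A.card:ℝ) := Nat.cast_nonneg _; linarith
  have hdypos : (0 : ℝ) < (G.degree y : ℝ) := by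
    rw [hdegy]; push_cast; have h0 : (0:ℝ) ≤ (Bf.card:ℝ) := Nat.cast_nonneg _; linarith
  have hdxy : (G.degree x : ℝ) ≤ (G.degree y : ℝ) := by exact_mod_cast hd
  -- membership
  have hmem : (4 / (G.degree x : ℝ) + 6 / (G.degree y : ℝ) - 2) ∈
      { r : ℝ | ∃ f : V → ℤ,
        (∀ u v : V, |f u - f v| ≤ (G.dist u v : ℤ)) ∧
        f y - f x = 1 ∧
        r = graphLap G f x - graphLap G f y } := by
    refine ⟨f, hlip, by rw [hfy, hfx]; norm_num, ?_⟩
    rw [graphLap, graphLap, hsx, hsy]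
    field_simp
    ring
  -- lower bound
  have hlb : ∀ r ∈ { r : ℝ | ∃ f : V → ℤ,
      (∀ u v : V, |f u - f v| ≤ (G.dist u v : ℤ)) ∧
      f y - f x = 1 ∧
      r = graphLap G f x - graphLap G f y },
      4 / (G.degree x : ℝ) + 6 / (G.degree y : ℝ) - 2 ≤ r := by
    rintro r ⟨g, hg, hgyx, rfl⟩
    have hb1 : ∀ u v : V, G.Adj u v → -1 ≤ g u - g v ∧ g u - g v ≤ 1 := by
      intro u v huv
      have h := hg u v
      rw [dist1 huv] at h
      have h2 := abs_le.mp (by exact_mod_cast h : |g u - g v| ≤ (1 : ℤ))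
      exact h2
    have hgw := hb1 w x axw.symm
    have hgw2 := hb1 w y ayw.symm
    have hgz := hb1 z x axz.symm
    have hgz2 := hb1 z y ayz.symm
    have htw : 0 ≤ g w - g x ∧ g w - g x ≤ 1 := by omega
    have htz : 0 ≤ g z - g x ∧ g z - g x ≤ 1 := by omega
    have hsumA : -(A.card : ℤ) ≤ ∑ u ∈ A, (g u - g x) := by
      have h1 : ∀ u ∈ A, (-1 : ℤ) ≤ g u - g x :=
        fun u hu => (hb1 u x ((hAmem u hu).1.symm)).1
      have h2 := Finset.sum_le_sum h1
      rw [Finset.sum_const] at h2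
      simpa using h2
    have hsumB : ∑ u ∈ Bf, (g u - g y) ≤ (Bf.card : ℤ) := by
      have h1 : ∀ u ∈ Bf, g u - g y ≤ 1 :=
        fun u hu => (hb1 u y ((hBmem u hu).1.symm)).2
      have h2 := Finset.sum_le_sum h1
      rw [Finset.sum_const] at h2
      simpa using h2
    have hSxlb : 4 + ((g w - g x) + (g z - g x)) - (G.degree x : ℤ) ≤
        ∑ u ∈ G.neighborFinset x, (g u - g x) := by
      rw [hNx, Finset.sum_insert hyA, Finset.sum_insert hwA, Finset.sum_insert hzA]
      have hcast : (G.degree x : ℤ) = 3 + A.card := by exact_mod_cast hdegx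
      omega
    have hSyub : ∑ u ∈ G.neighborFinset y, (g u - g y) ≤
        ((g w - g x) + (g z - g x)) - 6 + (G.degree y : ℤ) := by
      rw [hNy, Finset.sum_insert hxB, Finset.sum_insert hwB, Finset.sum_insert hzB]
      have hcast : (G.degree y : ℤ) = 3 + Bf.card := by exact_mod_cast hdegy
      omega
    -- pass to the reals
    set T : ℝ := ((g w - g x : ℤ) : ℝ) + ((g z - g x : ℤ) : ℝ) with hT
    have hT0 : 0 ≤ T := by
      rw [hT]
      have h1 : (0:ℝ) ≤ ((g w - g x : ℤ) : ℝ) := by exact_mod_cast htw.1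
      have h2 : (0:ℝ) ≤ ((g z - g x : ℤ) : ℝ) := by exact_mod_cast htz.1
      linarith
    have hrx : ∑ u ∈ G.neighborFinset x, ((g u : ℝ) - (g x : ℝ)) =
        ((∑ u ∈ G.neighborFinset x, (g u - g x) : ℤ) : ℝ) := by push_cast; ring
    have hry : ∑ u ∈ G.neighborFinset y, ((g u : ℝ) - (g y : ℝ)) =
        ((∑ u ∈ G.neighborFinset y, (g u - g y) : ℤ) : ℝ) := by push_cast; ring
    have hA1 : 4 + T - (G.degree x : ℝ) ≤
        ((∑ u ∈ G.neighborFinset x, (g u - g x) : ℤ) : ℝ) := by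
      rw [hT]
      exact_mod_cast hSxlb
    have hA2 : ((∑ u ∈ G.neighborFinset y, (g u - g y) : ℤ) : ℝ) ≤
        T - 6 + (G.degree y : ℝ) := by
      rw [hT]
      exact_mod_cast hSyub
    rw [graphLap, graphLap, hrx, hry]
    have k1 : (4 + T - (G.degree x : ℝ)) / (G.degree x : ℝ) ≤
        ((∑ u ∈ G.neighborFinset x, (g u - g x) : ℤ) : ℝ) / (G.degree x : ℝ) := by
      gcongr
    have k2 : ((∑ u ∈ G.neighborFinset y, (g u - g y) : ℤ) : ℝ) / (G.degree y : ℝ) ≤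
        (T - 6 + (G.degree y : ℝ)) / (G.degree y : ℝ) := by
      gcongr
    have k3 : T / (G.degree y : ℝ) ≤ T / (G.degree x : ℝ) := by
      gcongr
    have e1 : (4 + T - (G.degree x : ℝ)) / (G.degree x : ℝ) =
        4 / (G.degree x : ℝ) + T / (G.degree x : ℝ) - 1 := by
      field_simp
      try ring
    have e2 : (T - 6 + (G.degree y : ℝ)) / (G.degree y : ℝ) =
        T / (G.degree y : ℝ) - 6 / (G.degree y : ℝ) + 1 := by
      field_simp
      try ring
    linarith
  rw [llyCurv]
  exact IsLeast.csInf_eq ⟨hmem, hlb⟩
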